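/- An NFA G is standard current-state opaque with respect to Σ_o and X_S if and only if its parallel composition with its observer, Cc(G, Obs(G)), contains no reachable state (x, q) with q ⊆ X_S. -/

import Mathlib

namespace SBO

variable {X E : Type}

/-- Extended transition function of an NFA. -/
def ext (δ : X → E → Set X) : X → List E → Set X
  | x, [] => {x}
  | x, σ :: s => ⋃ y ∈ δ x σ, ext δ y s

/-- A run from `x` to `z` labeled by `s`. -/
def IsRun (δ : X → E → Set X) : X → List E → X → Prop
  | x, [], z => x = z
  | x, σ :: s, z => ∃ y ∈ δ x σ, IsRun δ y s z

/-- A run all of whose states lie in `NS`. -/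
def IsNSRun (δ : X → E → Set X) (NS : Set X) : X → List E → X → Prop
  | x, [], z => x = z ∧ x ∈ NS
  | x, σ :: s, z => x ∈ NS ∧ ∃ y ∈ δ x σ, IsNSRun δ NS y s z

/-- Natural projection onto observable events. -/
def proj (Eo : E → Bool) (s : List E) : List E := s.filter Eo

/-- Strong K-step opacity, Definition 3.1 (suffix of the matching run is non-secret). -/
def KSSO (δ : X → E → Set X) (Eo : E → Bool) (X0 XS : Set X) (K : ℕ) : Prop :=
  ∀ x0 ∈ X0, ∀ s1 s2 : List E, ∀ x1 x2 : X,
    IsRun δ x0 s1 x1 → x1 ∈ XS → IsRun δ x1 s2 x2 → (proj Eo s2).length ≤ K →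
    ∃ x0' ∈ X0, ∃ s1' s2' : List E, ∃ x1' x2' : X,
      IsRun δ x0' s1' x1' ∧ IsNSRun δ XSᶜ x1' s2' x2' ∧
      proj Eo s1' = proj Eo s1 ∧ proj Eo s2' = proj Eo s2

/-- Strong K-step opacity, Definition 3.1b (matching run entirely non-secret). -/
def KSSOb (δ : X → E → Set X) (Eo : E → Bool) (X0 XS : Set X) (K : ℕ) : Prop :=
  ∀ x0 ∈ X0, ∀ s1 s2 : List E, ∀ x1 x2 : X,
    IsRun δ x0 s1 x1 → x1 ∈ XS → IsRun δ x1 s2 x2 → (proj Eo s2).length ≤ K →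
    ∃ x0' ∈ X0, ∃ s1' s2' : List E, ∃ x1' x2' : X,
      IsNSRun δ XSᶜ x0' s1' x1' ∧ IsNSRun δ XSᶜ x1' s2' x2' ∧
      proj Eo s1' = proj Eo s1 ∧ proj Eo s2' = proj Eo s2

/-- Standard current-state opacity. -/
def CSO (δ : X → E → Set X) (Eo : E → Bool) (X0 XS : Set X) : Prop :=
  ∀ x0 ∈ X0, ∀ s : List E, (∃ z ∈ ext δ x0 s, z ∈ XS) →
    ∃ x0' ∈ X0, ∃ s' : List E, proj Eo s' = proj Eo s ∧ ∃ z ∈ ext δ x0' s', z ∈ XSᶜ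

/-- Strong current-state opacity. -/
def SCSO (δ : X → E → Set X) (Eo : E → Bool) (X0 XS : Set X) : Prop :=
  ∀ x0 ∈ X0, ∀ s : List E, (∃ z ∈ ext δ x0 s, z ∈ XS) →
    ∃ x0' ∈ X0 \ XS, ∃ t : List E, ∃ x : X, IsNSRun δ XSᶜ x0' t x ∧ proj Eo t = proj Eo s

/-- Strong initial-state opacity. -/
def SISO (δ : X → E → Set X) (Eo : E → Bool) (X0 XS : Set X) : Prop :=
  ∀ x0 ∈ X0 ∩ XS, ∀ s : List E, (ext δ x0 s).Nonempty →
    ∃ x0' ∈ X0 \ XS, ∃ t : List E, ∃ x : X, IsNSRun δ XSᶜ x0' t x ∧ proj Eo t = proj Eo s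

/-- Strong infinite-step opacity. -/
def InfSSO (δ : X → E → Set X) (Eo : E → Bool) (X0 XS : Set X) : Prop :=
  ∀ x0 ∈ X0, ∀ s1 s2 : List E, (ext δ x0 (s1 ++ s2)).Nonempty →
    (∃ z ∈ ext δ x0 s1, z ∈ XS) →
    ∃ x0' ∈ X0 \ XS, ∃ t : List E, ∃ x : X, IsNSRun δ XSᶜ x0' t x ∧
      proj Eo t = proj Eo (s1 ++ s2)

/-- Observer transition on one observable event (empty set = undefined). -/
def obsStep (δ : X → E → Set X) (Eo : E → Bool) (q : Set X) (σ : E) : Set X :=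
  {x' | ∃ x ∈ q, ∃ w : List E, (∀ e ∈ w, Eo e = false) ∧ x' ∈ ext δ x (σ :: w)}

/-- Initial observer state: unobservable reach of the initial states. -/
def obsInit (δ : X → E → Set X) (Eo : E → Bool) (X0 : Set X) : Set X :=
  {x' | ∃ x ∈ X0, ∃ w : List E, (∀ e ∈ w, Eo e = false) ∧ x' ∈ ext δ x w}

/-- Observer transition extended to observation strings. -/
def obsExt (δ : X → E → Set X) (Eo : E → Bool) : Set X → List E → Set X
  | q, [] => q
  | q, σ :: α => obsExt δ Eo (obsStep δ Eo q σ) α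

/-- Synchronous step of `Cc(G, Obs(G))`. -/
def ccStep (δ : X → E → Set X) (Eo : E → Bool) (p p' : X × Set X) : Prop :=
  ∃ σ : E,
    (Eo σ = true ∧ p'.1 ∈ δ p.1 σ ∧ (obsStep δ Eo p.2 σ).Nonempty ∧
      p'.2 = obsStep δ Eo p.2 σ) ∨
    (Eo σ = false ∧ p'.1 ∈ δ p.1 σ ∧ p'.2 = p.2)

/-- Reachability in `Cc(G, Obs(G))`. -/
def ccReach (δ : X → E → Set X) (Eo : E → Bool) (X0 : Set X) (p : X × Set X) : Prop :=
  ∃ x ∈ obsInit δ Eo X0, Relation.ReflTransGen (ccStep δ Eo) (x, obsInit δ Eo X0) p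

/-- Deleting a set of transitions from an NFA. -/
def delTrans (δ : X → E → Set X) (Edel : Set (X × E × X)) : X → E → Set X :=
  fun x σ => {y ∈ δ x σ | (x, σ, y) ∉ Edel}

/-- Transitions of the non-secret subautomaton (secret states deleted). -/
def δdss (δ : X → E → Set X) (XS : Set X) : X → E → Set X :=
  fun x σ => {y ∈ δ x σ | x ∉ XS ∧ y ∉ XS}

/-- One step of the concurrent composition `Cc(Ĝ, G̃_obs)`. -/
def cc2Step (δ δt : X → E → Set X) (Eo : E → Bool) (p : X × Set X) (σ : E) :
    Set (X × Set X) :=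
  if Eo σ then {p' | p'.1 ∈ δ p.1 σ ∧ p'.2 = obsStep δt Eo p.2 σ}
  else {p' | p'.1 ∈ δ p.1 σ ∧ p'.2 = p.2}

/-- Extended transition function of `Cc(Ĝ, G̃_obs)`. -/
def cc2Ext (δ δt : X → E → Set X) (Eo : E → Bool) : (X × Set X) → List E → Set (X × Set X)
  | p, [] => {p}
  | p, σ :: s => ⋃ p' ∈ cc2Step δ δt Eo p σ, cc2Ext δ δt Eo p' s

/-- Initial states of `Cc(Ĝ, G̃_obs)`. -/
def ccInit (δ : X → E → Set X) (Eo : E → Bool) (X0 XS : Set X) : Set (X × Set X) :=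
  {p | ∃ α : List E, (∀ e ∈ α, Eo e = true) ∧
    p.1 ∈ XS ∩ obsExt δ Eo (obsInit δ Eo X0) α ∧
    p.2 = obsExt δ Eo (obsInit δ Eo X0) α ∩ XSᶜ}

end SBO

open SBO

namespace SBOProof

open SBO

variable {X E : Type} (δ : X → E → Set X) (Eo : E → Bool)

theorem ext_append (s t : List E) (x : X) :
    ext δ x (s ++ t) = ⋃ y ∈ ext δ x s, ext δ y t := by
  induction s generalizing x with
  | nil => simp [ext]
  | cons σ s ih =>
    ext z
    constructor
    · intro hz
      rcases Set.mem_iUnion₂.1 (show z ∈ ⋃ y ∈ δ x σ, ext δ y (s ++ t) from hz)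
        with ⟨y, hy, hz⟩
      rw [ih] at hz
      rcases Set.mem_iUnion₂.1 hz with ⟨m, hm, hz⟩
      exact Set.mem_biUnion
        (show m ∈ ext δ x (σ :: s) from Set.mem_biUnion hy hm) hz
    · intro hz
      rcases Set.mem_iUnion₂.1 hz with ⟨m, hm, hz⟩
      rcases Set.mem_iUnion₂.1 (show m ∈ ⋃ y ∈ δ x σ, ext δ y s from hm)
        with ⟨y, hy, hm⟩
      have : z ∈ ext δ y (s ++ t) := by rw [ih]; exact Set.mem_biUnion hm hz
      exact Set.mem_biUnion hy this

/-- unobservable-reach closedness -/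
def URc (q : Set X) : Prop :=
  ∀ x ∈ q, ∀ w : List E, (∀ e ∈ w, Eo e = false) → ext δ x w ⊆ q

theorem urc_obsInit (X0 : Set X) : URc δ Eo (obsInit δ Eo X0) := by
  rintro x ⟨x0, hx0, w, hw, hx⟩ w' hw' z hz
  refine ⟨x0, hx0, w ++ w', ?_, ?_⟩
  · intro e he; rcases List.mem_append.1 he with h | h
    · exact hw e h
    · exact hw' e h
  · rw [ext_append]; exact Set.mem_biUnion hx hz

theorem urc_obsStep {q : Set X} (h : URc δ Eo q) (σ : E) :
    URc δ Eo (obsStep δ Eo q σ) := by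
  rintro x ⟨y, hy, w, hw, hx⟩ w' hw' z hz
  refine ⟨y, hy, w ++ w', ?_, ?_⟩
  · intro e he; rcases List.mem_append.1 he with h | h
    · exact hw e h
    · exact hw' e h
  · have : (σ :: w) ++ w' = σ :: (w ++ w') := rfl
    rw [← this, ext_append]; exact Set.mem_biUnion hx hz

theorem mem_obsExt {q : Set X} (hq : URc δ Eo q) (α : List E)
    (hα : ∀ e ∈ α, Eo e = true) (z : X) :
    z ∈ obsExt δ Eo q α ↔ ∃ x ∈ q, ∃ s : List E, proj Eo s = α ∧ z ∈ ext δ x s := by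
  induction α generalizing q with
  | nil =>
    simp only [obsExt]
    constructor
    · intro hz; exact ⟨z, hz, [], rfl, rfl⟩
    · rintro ⟨x, hx, s, hs, hz⟩
      exact hq x hx s (by simpa [proj, List.filter_eq_nil_iff] using hs) hz
  | cons σ α ih =>
    simp only [obsExt]
    rw [ih (urc_obsStep δ Eo hq σ) (fun e he => hα e (List.mem_cons_of_mem _ he))]
    constructor
    · rintro ⟨x, ⟨y, hy, w, hw, hx⟩, s, hs, hz⟩
      refine ⟨y, hy, (σ :: w) ++ s, ?_, ?_⟩
      · have hσ : Eo σ = true := hα σ List.mem_cons_self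
        have hwnil : List.filter Eo w = [] :=
          List.filter_eq_nil_iff.2 (fun e he => by simp [hw e he])
        simp [proj, List.filter_append, hσ, hwnil]
        exact hs
      · rw [ext_append]; exact Set.mem_biUnion hx hz
    · rintro ⟨x, hx, s, hs, hz⟩
      have := List.filter_eq_cons_iff.1 hs
      rcases this with ⟨u, v, rfl, hu, hσ, hv⟩
      have hz' : z ∈ ⋃ y ∈ ext δ x (u ++ [σ]), ext δ y v := by
        have : u ++ σ :: v = (u ++ [σ]) ++ v := by simp
        rw [this, ext_append] at hz; exact hz
      rcases Set.mem_iUnion₂.1 hz' with ⟨y, hy, hzy⟩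
      have hy' : y ∈ ⋃ m ∈ ext δ x u, ext δ m [σ] := by
        rw [← ext_append]; exact hy
      rcases Set.mem_iUnion₂.1 hy' with ⟨m, hm, hym⟩
      have hmq : m ∈ q := hq x hx u (by simpa using hu) hm
      have hyo : y ∈ obsStep δ Eo q σ := by
        refine ⟨m, hmq, [], by simp, ?_⟩
        simpa [ext] using hym
      exact ⟨y, hyo, v, hv, hzy⟩

theorem obsExt_snoc (q : Set X) (α : List E) (σ : E) :
    obsExt δ Eo q (α ++ [σ]) = obsStep δ Eo (obsExt δ Eo q α) σ := by
  induction α generalizing q with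
  | nil => simp [obsExt]
  | cons τ α ih => simp [obsExt, ih]

theorem reach_of_run (s : List E) :
    ∀ (x x' : X) (q : Set X), URc δ Eo q → x ∈ q → x' ∈ ext δ x s →
    Relation.ReflTransGen (ccStep δ Eo) (x, q) (x', obsExt δ Eo q (proj Eo s)) := by
  induction s with
  | nil =>
    intro x x' q _ _ hx'
    simp only [ext, Set.mem_singleton_iff] at hx'
    subst hx'
    simp only [proj, List.filter_nil, obsExt]
    exact Relation.ReflTransGen.refl
  | cons σ s ih =>
    intro x x' q hq hx hx'
    simp only [ext] at hx'
    rcases Set.mem_iUnion₂.1 hx' with ⟨y, hy, hx'y⟩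
    cases hEo : Eo σ with
    | true =>
      have hyo : y ∈ obsStep δ Eo q σ := ⟨x, hx, [], by simp, by simpa [ext] using hy⟩
      have step : ccStep δ Eo (x, q) (y, obsStep δ Eo q σ) :=
        ⟨σ, Or.inl ⟨hEo, hy, ⟨y, hyo⟩, rfl⟩⟩
      have := ih y x' (obsStep δ Eo q σ) (urc_obsStep δ Eo hq σ) hyo hx'y
      have hpr : proj Eo (σ :: s) = σ :: proj Eo s := by simp [proj, hEo]
      rw [hpr]
      exact Relation.ReflTransGen.head step (by simpa [obsExt] using this)
    | false =>
      have hyq : y ∈ q := hq x hx [σ] (by simp [hEo]) (by simpa [ext] using hy)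
      have step : ccStep δ Eo (x, q) (y, q) := ⟨σ, Or.inr ⟨hEo, hy, rfl⟩⟩
      have := ih y x' q hq hyq hx'y
      have hpr : proj Eo (σ :: s) = proj Eo s := by simp [proj, hEo]
      rw [hpr]
      exact Relation.ReflTransGen.head step this

theorem reach_char (X0 : Set X) (x : X) (q : Set X) :
    ccReach δ Eo X0 (x, q) ↔
      ∃ x0 ∈ X0, ∃ s : List E, x ∈ ext δ x0 s ∧
        q = obsExt δ Eo (obsInit δ Eo X0) (proj Eo s) := by
  constructor
  · rintro ⟨y, hy, hr⟩
    have : ∀ p : X × Set X,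
        Relation.ReflTransGen (ccStep δ Eo) (y, obsInit δ Eo X0) p →
        ∃ x0 ∈ X0, ∃ s : List E, p.1 ∈ ext δ x0 s ∧
          p.2 = obsExt δ Eo (obsInit δ Eo X0) (proj Eo s) := by
      intro p hp
      induction hp with
      | refl =>
        rcases hy with ⟨x0, hx0, w, hw, hyw⟩
        have hwnil : List.filter Eo w = [] :=
          List.filter_eq_nil_iff.2 (fun e he => by simp [hw e he])
        exact ⟨x0, hx0, w, hyw, by simp [proj, hwnil, obsExt]⟩
      | tail _ hstep ih =>
        rcases ih with ⟨x0, hx0, s, hxs, hq⟩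
        rcases hstep with ⟨σ, h | h⟩
        · rcases h with ⟨hEo, hδ, _, hq'⟩
          refine ⟨x0, hx0, s ++ [σ], ?_, ?_⟩
          · rw [ext_append]
            exact Set.mem_biUnion hxs (by simp [ext]; exact hδ)
          · rw [hq', hq]
            have : proj Eo (s ++ [σ]) = proj Eo s ++ [σ] := by
              simp [proj, List.filter_append, hEo]
            rw [this, obsExt_snoc]
        · rcases h with ⟨hEo, hδ, hq'⟩
          refine ⟨x0, hx0, s ++ [σ], ?_, ?_⟩
          · rw [ext_append]
            exact Set.mem_biUnion hxs (by simp [ext]; exact hδ)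
          · rw [hq', hq]
            have : proj Eo (s ++ [σ]) = proj Eo s := by
              simp [proj, List.filter_append, hEo]
            rw [this]
    exact this (x, q) hr
  · rintro ⟨x0, hx0, s, hxs, rfl⟩
    refine ⟨x0, ⟨x0, hx0, [], by simp, by simp [ext]⟩, ?_⟩
    exact reach_of_run δ Eo s x0 x _ (urc_obsInit δ Eo X0) ⟨x0, hx0, [], by simp, by simp [ext]⟩ hxs

theorem proj_obs (s : List E) : ∀ e ∈ proj Eo s, Eo e = true := by
  intro e he; exact (List.mem_filter.1 he).2

end SBOProof

/-- standard current-state opacity holds iff `Cc(G, Obs(G))` has no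
reachable state `(x, q)` with `q ⊆ X_S`. -/
theorem CSO_iff_ccGObs {X E : Type} (δ : X → E → Set X) (Eo : E → Bool)
    (X0 XS : Set X) :
    CSO δ Eo X0 XS ↔
      ¬ ∃ x : X, ∃ q : Set X, ccReach δ Eo X0 (x, q) ∧ q ⊆ XS := by
  open SBOProof in
  constructor
  · rintro hCSO ⟨x, q, hreach, hqs⟩
    rcases (reach_char δ Eo X0 x q).1 hreach with ⟨x0, hx0, s, hxs, rfl⟩
    have hxq : x ∈ obsExt δ Eo (obsInit δ Eo X0) (proj Eo s) :=
      (mem_obsExt δ Eo (urc_obsInit δ Eo X0) _ (proj_obs Eo s) x).2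
        ⟨x0, ⟨x0, hx0, [], by simp, by simp [ext]⟩, s, rfl, hxs⟩
    rcases hCSO x0 hx0 s ⟨x, hxs, hqs hxq⟩ with ⟨x0', hx0', s', hps, z, hz, hzns⟩
    have hzq : z ∈ obsExt δ Eo (obsInit δ Eo X0) (proj Eo s) :=
      (mem_obsExt δ Eo (urc_obsInit δ Eo X0) _ (proj_obs Eo s) z).2
        ⟨x0', ⟨x0', hx0', [], by simp, by simp [ext]⟩, s', hps, hz⟩
    exact hzns (hqs hzq)
  · intro h x0 hx0 s ⟨z, hz, hzS⟩
    set q := obsExt δ Eo (obsInit δ Eo X0) (proj Eo s) with hqdef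
    have hreach : ccReach δ Eo X0 (z, q) :=
      (reach_char δ Eo X0 z q).2 ⟨x0, hx0, s, hz, rfl⟩
    have hnot : ¬ q ⊆ XS := fun hsub => h ⟨z, q, hreach, hsub⟩
    rcases Set.not_subset.1 hnot with ⟨z', hz'q, hz'ns⟩
    rcases (mem_obsExt δ Eo (urc_obsInit δ Eo X0) _ (proj_obs Eo s) z').1 hz'q
      with ⟨y, ⟨x0', hx0', w, hw, hyw⟩, s', hps', hz's'⟩
    refine ⟨x0', hx0', w ++ s', ?_, z', ?_, hz'ns⟩
    · have hwnil : List.filter Eo w = [] :=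
        List.filter_eq_nil_iff.2 (fun e he => by simp [hw e he])
      simp only [proj, List.filter_append, hwnil, List.nil_append]
      exact hps'
    · rw [ext_append]; exact Set.mem_biUnion hyw hz's'
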